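/- (Composition of two rotations) For all vectors m, n ∈ ℝ³ and all angles γ, δ ∈ ℝ, the product of rotation gates satisfies R^m(γ) * R^n(δ) = a • I − Complex.I • (v·σ), where a = cos(γ/2)·cos(δ/2) − sin(γ/2)·sin(δ/2)·(m ⋅ n) (with ⋅ the Euclidean dot product) and v = cos(γ/2)·sin(δ/2) • n + sin(γ/2)·cos(δ/2) • m + sin(γ/2)·sin(δ/2) • (m ×₃ n) (with ×₃ the cross product in ℝ³). -/

import Mathlib

open Matrix

/-- The Pauli X matrix. -/
noncomputable def X : Matrix (Fin 2) (Fin 2) ℂ := !![0, 1; 1, 0]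

/-- The Pauli Y matrix. -/
noncomputable def Y : Matrix (Fin 2) (Fin 2) ℂ := !![0, -Complex.I; Complex.I, 0]

/-- The Pauli Z matrix. -/
noncomputable def Z : Matrix (Fin 2) (Fin 2) ℂ := !![1, 0; 0, -1]

/-- For `n = (n₁,n₂,n₃) ∈ ℝ³`, the Pauli vector `n·σ = n₁X + n₂Y + n₃Z`. -/
noncomputable def pauliVec (n : Fin 3 → ℝ) : Matrix (Fin 2) (Fin 2) ℂ :=
  (n 0 : ℂ) • X + (n 1 : ℂ) • Y + (n 2 : ℂ) • Z

/-- The rotation gate `R^n(θ) = cos(θ/2)•I − (i·sin(θ/2))•(n·σ)`. -/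
noncomputable def rotGate (n : Fin 3 → ℝ) (θ : ℝ) : Matrix (Fin 2) (Fin 2) ℂ :=
  ((Real.cos (θ / 2) : ℝ) : ℂ) • (1 : Matrix (Fin 2) (Fin 2) ℂ)
    - (Complex.I * ((Real.sin (θ / 2) : ℝ) : ℂ)) • pauliVec n

/-- **Composition of two rotations**:
`R^m(γ) * R^n(δ) = a • I − i • (v·σ)` with
`a = cos(γ/2)cos(δ/2) − sin(γ/2)sin(δ/2)(m⋅n)` and
`v = cos(γ/2)sin(δ/2)•n + sin(γ/2)cos(δ/2)•m + sin(γ/2)sin(δ/2)•(m ×₃ n)`. -/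
theorem rotation_composition (m n : Fin 3 → ℝ) (γ δ : ℝ) :
    rotGate m γ * rotGate n δ =
      ((Real.cos (γ / 2) * Real.cos (δ / 2)
          - Real.sin (γ / 2) * Real.sin (δ / 2) * (m ⬝ᵥ n) : ℝ) : ℂ)
            • (1 : Matrix (Fin 2) (Fin 2) ℂ)
        - Complex.I • pauliVec
            ((Real.cos (γ / 2) * Real.sin (δ / 2)) • n
              + (Real.sin (γ / 2) * Real.cos (δ / 2)) • m
              + (Real.sin (γ / 2) * Real.sin (δ / 2)) • (m ⨯₃ n)) := by
  have hm : ∀ (k : Fin 3 → ℝ) (θ : ℝ), rotGate k θ =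
      !![(Real.cos (θ/2) : ℂ) - Complex.I * Real.sin (θ/2) * k 2,
          -(Complex.I * Real.sin (θ/2)) * (k 0 - Complex.I * k 1);
         -(Complex.I * Real.sin (θ/2)) * (k 0 + Complex.I * k 1),
          (Real.cos (θ/2) : ℂ) + Complex.I * Real.sin (θ/2) * k 2] := by
    intro k θ
    ext i j
    fin_cases i <;> fin_cases j <;>
      simp [rotGate, pauliVec, X, Y, Z, Matrix.one_apply] <;> ring_nf <;> tauto
  rw [hm, hm]
  have hp : ∀ (k : Fin 3 → ℝ), pauliVec k =
      !![(k 2 : ℂ), (k 0 : ℂ) - Complex.I * k 1;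
         (k 0 : ℂ) + Complex.I * k 1, -(k 2 : ℂ)] := by
    intro k
    ext i j
    fin_cases i <;> fin_cases j <;> simp [pauliVec, X, Y, Z] <;> ring
  rw [hp]
  ext i j
  fin_cases i <;> fin_cases j <;>
    simp [Matrix.mul_apply, Matrix.one_apply, crossProduct, dotProduct,
      Fin.sum_univ_succ] <;>
    ring_nf <;>
    simp only [show Complex.I ^ 2 = -1 from Complex.I_sq,
      show Complex.I ^ 3 = -Complex.I by simp [pow_succ],
      show Complex.I ^ 4 = 1 by simp [pow_succ]] <;>
    ring
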